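/- Let 𝒜 = (Pᵀ ⊗ I_n)(A_1 ⊕ ⋯ ⊕ A_L) with P row-stochastic and A_ℓ nonnegative, and suppose αρ(𝒜) < 1 with α > 0. Given a positive vector v̄ ∈ ℝ^n and initial distribution ζ_0 ∈ ℝ^L with all entries positive, the vector v = (𝟙_Lᵀ ⊗ I_n)(I_{nL} - α𝒜)^{-1}(ζ_0 ⊗ 𝟙_n) satisfies v < v̄ entrywise if and only if there exist positive vectors λ_1, …, λ_L ∈ ℝ^n such that (ζ_0)_k·𝟙_n + α·∑_{ℓ=1}^L P_{ℓk}·A_ℓ·λ_ℓ < λ_k for every k ∈ [L], and ∑_{ℓ=1}^L λ_ℓ < v̄. -/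

import Mathlib

open Matrix

noncomputable def specRad {m : Type*} [Fintype m] [DecidableEq m]
    (A : Matrix m m ℝ) : ℝ :=
  (spectralRadius ℂ (A.map (algebraMap ℝ ℂ))).toReal

noncomputable def calA {n L : ℕ} (P : Matrix (Fin L) (Fin L) ℝ)
    (A : Fin L → Matrix (Fin n) (Fin n) ℝ) :
    Matrix (Fin L × Fin n) (Fin L × Fin n) ℝ :=
  (Matrix.kroneckerMap (· * ·) Pᵀ (1 : Matrix (Fin n) (Fin n) ℝ)) *
    ((Matrix.blockDiagonal fun ℓ => A ℓ).reindex
      (Equiv.prodComm (Fin n) (Fin L)) (Equiv.prodComm (Fin n) (Fin L)))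

section Stmt12Aux

open Filter Topology Finset
open scoped ENNReal NNReal

attribute [local instance] Matrix.linftyOpNormedRing Matrix.linftyOpNormedAlgebra

variable {m : Type*} [Fintype m] [DecidableEq m]

private theorem entry_norm_le' (A : Matrix m m ℂ) (i j : m) : ‖A i j‖ ≤ ‖A‖ := by
  have h1 : ‖A i j‖₊ ≤ ∑ j', ‖A i j'‖₊ :=
    Finset.single_le_sum (f := fun j' => ‖A i j'‖₊) (fun _ _ => zero_le) (mem_univ j)
  have h2 : (∑ j', ‖A i j'‖₊) ≤ ‖A‖₊ := by
    rw [Matrix.linfty_opNNNorm_def]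
    exact Finset.le_sup (f := fun i => ∑ j', ‖A i j'‖₊) (mem_univ i)
  exact_mod_cast h1.trans h2

private theorem pow_entry_tendsto' (M : Matrix m m ℝ)
    (hρ : spectralRadius ℂ (M.map (algebraMap ℝ ℂ)) < 1) (i j : m) :
    Tendsto (fun k : ℕ => (M ^ k) i j) atTop (𝓝 0) := by
  haveI : CompleteSpace (Matrix m m ℂ) :=
    FiniteDimensional.complete ℂ _
  set Mc := M.map (algebraMap ℝ ℂ) with hMc
  have hgel := spectrum.pow_nnnorm_pow_one_div_tendsto_nhds_spectralRadius Mc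
  set c : ℝ := ((spectralRadius ℂ Mc).toReal + 1) / 2 with hc
  have hρtop : spectralRadius ℂ Mc ≠ ⊤ := (hρ.trans ENNReal.one_lt_top).ne
  have hc0 : 0 < c := by
    have := ENNReal.toReal_nonneg (a := spectralRadius ℂ Mc); positivity
  have hc1 : c < 1 := by
    have : (spectralRadius ℂ Mc).toReal < 1 := by
      rw [← ENNReal.toReal_one]
      exact ENNReal.toReal_strict_mono ENNReal.one_ne_top hρ
    rw [hc]; linarith
  have hρc : spectralRadius ℂ Mc < ENNReal.ofReal c := by
    rw [← ENNReal.ofReal_toReal hρtop]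
    apply ENNReal.ofReal_lt_ofReal_iff hc0 |>.2
    have := ENNReal.toReal_nonneg (a := spectralRadius ℂ Mc)
    rw [hc]; linarith [hc1]
  have hev : ∀ᶠ k : ℕ in atTop, (‖Mc ^ k‖₊ : ℝ≥0∞) ^ (1 / (k:ℝ)) < ENNReal.ofReal c :=
    hgel.eventually_lt_const hρc
  have key : ∀ᶠ k : ℕ in atTop, ‖Mc ^ k‖ ≤ c ^ k := by
    filter_upwards [hev, eventually_ge_atTop 1] with k hk hk1
    have hk0 : (k:ℝ) ≠ 0 := by exact_mod_cast Nat.one_le_iff_ne_zero.mp hk1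
    have hxk : (‖Mc ^ k‖₊ : ℝ≥0∞) = ((‖Mc ^ k‖₊ : ℝ≥0∞) ^ (1/(k:ℝ))) ^ (k:ℝ) := by
      rw [← ENNReal.rpow_mul, one_div, inv_mul_cancel₀ hk0, ENNReal.rpow_one]
    have h2 : (‖Mc ^ k‖₊ : ℝ≥0∞) ≤ (ENNReal.ofReal c) ^ (k:ℝ) := by
      rw [hxk]
      exact ENNReal.rpow_le_rpow hk.le (by positivity)
    have h3 : (ENNReal.ofReal c) ^ (k:ℝ) = ENNReal.ofReal (c ^ k) := by
      rw [ENNReal.rpow_natCast, ← ENNReal.ofReal_pow hc0.le]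
    rw [h3] at h2
    have := (ENNReal.le_ofReal_iff_toReal_le (by exact ENNReal.coe_ne_top) (by positivity)).1 h2
    simpa using this
  apply squeeze_zero_norm' _ (tendsto_pow_atTop_nhds_zero_of_lt_one hc0.le hc1)
  filter_upwards [key] with k hk
  have hmap : Mc ^ k = (M ^ k).map (algebraMap ℝ ℂ) := by
    rw [hMc, ← RingHom.mapMatrix_apply, ← RingHom.mapMatrix_apply, map_pow]
  have : ‖(M ^ k) i j‖ = ‖(Mc ^ k) i j‖ := by
    rw [hmap]; simp [Matrix.map_apply]
  rw [this]
  exact (entry_norm_le' _ i j).trans hk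

private theorem isUnit_det_one_sub' (M : Matrix m m ℝ)
    (hρ : spectralRadius ℂ (M.map (algebraMap ℝ ℂ)) < 1) :
    IsUnit (1 - M).det := by
  set Mc := M.map (algebraMap ℝ ℂ) with hMc
  have h1 : IsUnit (1 - Mc) := by
    have hmem : (1:ℂ) ∈ resolventSet ℂ Mc :=
      spectrum.mem_resolventSet_of_spectralRadius_lt (by simpa using hρ)
    rw [spectrum.mem_resolventSet_iff] at hmem
    simpa using hmem
  have h2 : (1 - Mc) = (1 - M).map (algebraMap ℝ ℂ) := by
    ext p q
    by_cases hpq : p = q <;>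
      simp [hMc, Matrix.map_apply, Matrix.sub_apply, Matrix.one_apply, hpq, algebraMap]
  rw [h2, Matrix.isUnit_iff_isUnit_det, ← RingHom.mapMatrix_apply, ← RingHom.map_det,
    isUnit_iff_ne_zero] at h1
  rw [isUnit_iff_ne_zero]
  intro h
  exact h1 (by rw [h, map_zero])

private theorem pow_entry_nonneg' (M : Matrix m m ℝ) (hM : ∀ i j, 0 ≤ M i j) (k : ℕ) :
    ∀ i j, 0 ≤ (M ^ k) i j := by
  induction k with
  | zero => intro i j; simp [Matrix.one_apply]; split <;> norm_num
  | succ k ih =>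
    intro i j
    rw [pow_succ, Matrix.mul_apply]
    exact Finset.sum_nonneg fun q _ => mul_nonneg (ih i q) (hM q j)

private theorem inv_one_sub_entry_nonneg' (M : Matrix m m ℝ) (hM : ∀ i j, 0 ≤ M i j)
    (hρ : spectralRadius ℂ (M.map (algebraMap ℝ ℂ)) < 1) :
    ∀ i j, 0 ≤ (1 - M)⁻¹ i j := by
  intro i j
  have hdet := isUnit_det_one_sub' M hρ
  have hid : ∀ k : ℕ, (∑ a ∈ range k, M ^ a) = (1 - M)⁻¹ - (1 - M)⁻¹ * (M ^ k) := by
    intro k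
    have h1 : (1 - M) * (∑ a ∈ range k, M ^ a) = 1 - M ^ k := by
      rw [← neg_sub M 1, neg_mul, mul_geom_sum, neg_sub]
    calc (∑ a ∈ range k, M ^ a)
        = ((1 - M)⁻¹ * (1 - M)) * (∑ a ∈ range k, M ^ a) := by
          rw [Matrix.nonsing_inv_mul _ hdet, one_mul]
      _ = (1 - M)⁻¹ * ((1 - M) * (∑ a ∈ range k, M ^ a)) := by rw [mul_assoc]
      _ = (1 - M)⁻¹ * (1 - M ^ k) := by rw [h1]
      _ = (1 - M)⁻¹ - (1 - M)⁻¹ * (M ^ k) := by rw [mul_sub, mul_one]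
  have htend : Tendsto (fun k : ℕ => ((1 - M)⁻¹ * (M ^ k)) i j) atTop (𝓝 0) := by
    have h0 : ∀ q : m, Tendsto (fun k : ℕ => (1 - M)⁻¹ i q * (M ^ k) q j) atTop (𝓝 0) := by
      intro q
      simpa using (pow_entry_tendsto' M hρ q j).const_mul ((1 - M)⁻¹ i q)
    have := tendsto_finset_sum (univ : Finset m) (fun q _ => h0 q)
    simpa [Matrix.mul_apply] using this
  have hlim : Tendsto (fun k : ℕ => (∑ a ∈ range k, M ^ a) i j) atTop (𝓝 ((1 - M)⁻¹ i j)) := by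
    have : (fun k : ℕ => (∑ a ∈ range k, M ^ a) i j)
        = fun k : ℕ => (1 - M)⁻¹ i j - ((1 - M)⁻¹ * (M ^ k)) i j := by
      funext k; rw [hid k]; simp [Matrix.sub_apply]
    rw [this]
    simpa using tendsto_const_nhds.sub htend
  refine le_of_tendsto_of_tendsto' tendsto_const_nhds hlim fun k => ?_
  rw [Matrix.sum_apply]
  exact Finset.sum_nonneg fun a _ => pow_entry_nonneg' M hM a i j

private theorem smul_spectralRadius_lt' {m : Type*} [Fintype m] [DecidableEq m] [Nonempty m]
    (M : Matrix m m ℝ) {α : ℝ} (hα : 0 < α) (h : α * specRad M < 1) :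
    spectralRadius ℂ ((α • M).map (algebraMap ℝ ℂ)) < 1 := by
  haveI : NormOneClass (Matrix m m ℂ) := Matrix.linfty_opNormOneClass
  set Mc := M.map (algebraMap ℝ ℂ) with hMc
  have hαc : (algebraMap ℝ ℂ α) ≠ 0 := by
    simpa using hα.ne'
  have hmap : (α • M).map (algebraMap ℝ ℂ) = (algebraMap ℝ ℂ α) • Mc := by
    ext p q; simp [Matrix.map_apply, Matrix.smul_apply, hMc]
  rw [hmap]
  have hfin : spectralRadius ℂ Mc ≠ ⊤ :=
    ((spectrum.spectralRadius_le_nnnorm (𝕜 := ℂ) Mc).trans_lt ENNReal.coe_lt_top).ne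
  have hbound : spectralRadius ℂ ((algebraMap ℝ ℂ α) • Mc)
      ≤ ENNReal.ofReal (α * specRad M) := by
    rw [spectralRadius]
    refine iSup₂_le fun z hz => ?_
    rw [show (algebraMap ℝ ℂ α) • Mc = (Units.mk0 _ hαc : ℂˣ) • Mc from rfl,
      spectrum.unit_smul_eq_smul] at hz
    obtain ⟨w, hw, rfl⟩ := hz
    have hwle : (‖w‖₊ : ℝ≥0∞) ≤ spectralRadius ℂ Mc :=
      le_iSup₂ (f := fun k (_ : k ∈ spectrum ℂ Mc) => (‖k‖₊ : ℝ≥0∞)) w hw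
    have hwr : ‖w‖ ≤ specRad M := by
      have h2 := ENNReal.toReal_mono hfin hwle
      simpa [specRad, hMc] using h2
    have hb : (0:ℝ) ≤ α * specRad M :=
      mul_nonneg hα.le (by unfold specRad; exact ENNReal.toReal_nonneg)
    refine (ENNReal.le_ofReal_iff_toReal_le ENNReal.coe_ne_top hb).2 ?_
    have heq : ‖(algebraMap ℝ ℂ α) • w‖ = α * ‖w‖ := by
      rw [norm_smul]
      simp [abs_of_pos hα]
    simp only [ENNReal.coe_toReal, coe_nnnorm, Units.smul_def, Units.val_mk0]
    rw [heq]
    exact mul_le_mul_of_nonneg_left hwr hα.le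
  exact hbound.trans_lt (ENNReal.ofReal_lt_one.2 h)

private theorem calA_apply' {n L : ℕ} (P : Matrix (Fin L) (Fin L) ℝ)
    (A : Fin L → Matrix (Fin n) (Fin n) ℝ) (k ℓ : Fin L) (i j : Fin n) :
    calA P A (k, i) (ℓ, j) = P ℓ k * A ℓ i j := by
  simp only [calA, Matrix.mul_apply, Fintype.sum_prod_type,
    Matrix.kroneckerMap_apply, Matrix.reindex_apply, Matrix.submatrix_apply,
    Equiv.prodComm_symm, Equiv.prodComm_apply, Prod.swap_prod_mk,
    Matrix.blockDiagonal_apply, Matrix.transpose_apply, Matrix.one_apply]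
  simp [mul_ite, ite_mul, zero_mul, mul_zero, Finset.sum_ite_eq, Finset.sum_ite_eq',
    eq_comm]

private theorem calA_mulVec' {n L : ℕ} (P : Matrix (Fin L) (Fin L) ℝ)
    (A : Fin L → Matrix (Fin n) (Fin n) ℝ) (y : Fin L × Fin n → ℝ) (k : Fin L) (i : Fin n) :
    (calA P A *ᵥ y) (k, i) = ∑ ℓ, P ℓ k * ∑ j, A ℓ i j * y (ℓ, j) := by
  rw [Matrix.mulVec, dotProduct]
  rw [Fintype.sum_prod_type]
  congr 1; funext ℓ
  rw [Finset.mul_sum]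
  congr 1; funext j
  rw [calA_apply', mul_assoc]

end Stmt12Aux

/-- LP characterization of the Katz centrality of Markovian temporal networks:
$v<\bar v$ iff there are positive vectors $\lambda_1,\dots,\lambda_L$ with
$(\zeta_0)_k\mathbf 1 + \alpha\sum_\ell P_{\ell k}A_\ell\lambda_\ell < \lambda_k$
and $\sum_\ell\lambda_\ell<\bar v$. -/
theorem stmt12 {n L : ℕ} (P : Matrix (Fin L) (Fin L) ℝ)
    (hP : ∀ ℓ k, 0 ≤ P ℓ k) (hProw : ∀ ℓ, ∑ k, P ℓ k = 1)
    (A : Fin L → Matrix (Fin n) (Fin n) ℝ) (hA : ∀ ℓ i j, 0 ≤ A ℓ i j)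
    (ζ0 : Fin L → ℝ) (hζ0 : ∀ ℓ, 0 < ζ0 ℓ) (hζ0sum : ∑ ℓ, ζ0 ℓ = 1)
    (α : ℝ) (hα : 0 < α) (hρ : α * specRad (calA P A) < 1)
    (vbar : Fin n → ℝ) (hvbar : ∀ i, 0 < vbar i) :
    (∀ i : Fin n,
        (∑ ℓ : Fin L,
          ((1 - α • calA P A)⁻¹ *ᵥ fun p : Fin L × Fin n => ζ0 p.1) (ℓ, i))
          < vbar i) ↔
      ∃ lam : Fin L → Fin n → ℝ,
        (∀ ℓ i, 0 < lam ℓ i) ∧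
        (∀ (k : Fin L) (i : Fin n),
          ζ0 k + α * ∑ ℓ, P ℓ k * (A ℓ *ᵥ lam ℓ) i < lam k i) ∧
        (∀ i, ∑ ℓ, lam ℓ i < vbar i) := by
  classical
  rcases Nat.eq_zero_or_pos n with hn | hn
  · subst hn
    constructor
    · intro _
      exact ⟨fun _ i => i.elim0, fun _ i => i.elim0, fun _ i => i.elim0, fun i => i.elim0⟩
    · intro _ i
      exact i.elim0
  have hL : 0 < L := by
    rcases Nat.eq_zero_or_pos L with h0 | h0
    · subst h0; simp at hζ0sum
    · exact h0
  haveI : Nonempty (Fin n) := ⟨⟨0, hn⟩⟩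
  haveI : Nonempty (Fin L) := ⟨⟨0, hL⟩⟩
  set M : Matrix (Fin L × Fin n) (Fin L × Fin n) ℝ := α • calA P A with hM
  have hMnn : ∀ p q, 0 ≤ M p q := by
    rintro ⟨k, i⟩ ⟨ℓ, j⟩
    rw [hM, Matrix.smul_apply, calA_apply', smul_eq_mul]
    exact mul_nonneg hα.le (mul_nonneg (hP _ _) (hA _ _ _))
  have hρ' : spectralRadius ℂ (M.map (algebraMap ℝ ℂ)) < 1 :=
    smul_spectralRadius_lt' _ hα hρ
  have hdet : IsUnit (1 - M).det := isUnit_det_one_sub' M hρ'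
  have hinvnn : ∀ p q, 0 ≤ (1 - M)⁻¹ p q := inv_one_sub_entry_nonneg' M hMnn hρ'
  set b : Fin L × Fin n → ℝ := fun p : Fin L × Fin n => ζ0 p.1 with hb
  set x : Fin L × Fin n → ℝ := (1 - M)⁻¹ *ᵥ b with hx
  have hfix : ∀ p, x p = b p + (M *ᵥ x) p := by
    have h1 : (1 - M) *ᵥ x = b := by
      rw [hx, Matrix.mulVec_mulVec, Matrix.mul_nonsing_inv _ hdet, Matrix.one_mulVec]
    intro p
    have h2 := congrFun h1 p
    rw [Matrix.sub_mulVec, Matrix.one_mulVec, Pi.sub_apply] at h2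
    linarith
  have hx0 : ∀ p, 0 ≤ x p := fun p =>
    Finset.sum_nonneg fun q _ => mul_nonneg (hinvnn p q) (hζ0 q.1).le
  have hMx0 : ∀ p, 0 ≤ (M *ᵥ x) p := fun p =>
    Finset.sum_nonneg fun q _ => mul_nonneg (hMnn p q) (hx0 q)
  have hxpos : ∀ p, 0 < x p := by
    intro p
    have h1 := hζ0 p.1
    have h2 := hMx0 p
    rw [hfix p]
    simp only [hb]
    linarith
  have hMv : ∀ (y : Fin L × Fin n → ℝ) (k : Fin L) (i : Fin n),
      (M *ᵥ y) (k, i) = α * ∑ ℓ, P ℓ k * ∑ j, A ℓ i j * y (ℓ, j) := by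
    intro y k i
    rw [hM, Matrix.smul_mulVec, Pi.smul_apply, calA_mulVec', smul_eq_mul]
  constructor
  · intro h
    have hvpos : ∀ i, 0 < ∑ ℓ, x (ℓ, i) := fun i =>
      Finset.sum_pos (fun ℓ _ => hxpos (ℓ, i)) Finset.univ_nonempty
    set ε : ℝ := Finset.univ.inf' Finset.univ_nonempty
      (fun i : Fin n => (vbar i - ∑ ℓ, x (ℓ, i)) / ((∑ ℓ, x (ℓ, i)) + 1)) with hε
    have hεpos : 0 < ε := by
      rw [hε, Finset.lt_inf'_iff]
      intro i _
      exact div_pos (sub_pos.2 (h i)) (by linarith [hvpos i])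
    have hεle : ∀ i, (1 + ε) * ∑ ℓ, x (ℓ, i) < vbar i := by
      intro i
      have h1 : ε ≤ (vbar i - ∑ ℓ, x (ℓ, i)) / ((∑ ℓ, x (ℓ, i)) + 1) :=
        Finset.inf'_le _ (Finset.mem_univ i)
      have h2 : ε * ∑ ℓ, x (ℓ, i)
          ≤ ((vbar i - ∑ ℓ, x (ℓ, i)) / ((∑ ℓ, x (ℓ, i)) + 1)) * ∑ ℓ, x (ℓ, i) :=
        mul_le_mul_of_nonneg_right h1 (hvpos i).le
      have h3 : ((vbar i - ∑ ℓ, x (ℓ, i)) / ((∑ ℓ, x (ℓ, i)) + 1)) * ∑ ℓ, x (ℓ, i)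
          < vbar i - ∑ ℓ, x (ℓ, i) := by
        rw [div_mul_eq_mul_div, div_lt_iff₀ (by linarith [hvpos i])]
        have h4 := hvpos i
        have h5 := h i
        nlinarith
      nlinarith [hvpos i]
    refine ⟨fun ℓ i => (1 + ε) * x (ℓ, i), fun ℓ i => mul_pos (by linarith) (hxpos _), ?_, ?_⟩
    · intro k i
      have hAl : ∀ ℓ, (A ℓ *ᵥ fun j => (1 + ε) * x (ℓ, j)) i
          = (1 + ε) * ∑ j, A ℓ i j * x (ℓ, j) := by
        intro ℓ
        rw [Matrix.mulVec, dotProduct, Finset.mul_sum]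
        congr 1; funext j; ring
      have hsum : ∑ ℓ, P ℓ k * ((1 + ε) * ∑ j, A ℓ i j * x (ℓ, j))
          = (1 + ε) * ∑ ℓ, P ℓ k * ∑ j, A ℓ i j * x (ℓ, j) := by
        rw [Finset.mul_sum]
        congr 1; funext ℓ; ring
      have hMxv := hMv x k i
      have hfixk := hfix (k, i)
      have hbk : b (k, i) = ζ0 k := rfl
      calc ζ0 k + α * ∑ ℓ, P ℓ k * (A ℓ *ᵥ fun j => (1 + ε) * x (ℓ, j)) i
          = ζ0 k + (1 + ε) * (α * ∑ ℓ, P ℓ k * ∑ j, A ℓ i j * x (ℓ, j)) := by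
            simp only [hAl]; rw [hsum]; ring
        _ = ζ0 k + (1 + ε) * (x (k, i) - ζ0 k) := by
            rw [← hMxv]
            rw [hbk] at hfixk
            congr 1
            rw [hfixk]; ring_nf
        _ < (1 + ε) * x (k, i) := by
            have := hζ0 k
            nlinarith
    · intro i
      rw [← Finset.mul_sum]
      exact hεle i
  · rintro ⟨lam, hpos, hineq, hsum⟩ i
    set lv : Fin L × Fin n → ℝ := fun p => lam p.1 p.2 with hlv
    have hstep : ∀ p, b p + (M *ᵥ lv) p < lv p := by
      rintro ⟨k, i'⟩
      have h1 := hineq k i'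
      rw [hMv lv k i']
      simpa [Matrix.mulVec, dotProduct, hb, hlv] using h1
    have hle : ∀ p, x p ≤ lv p := by
      have h1 : (1 - M)⁻¹ *ᵥ ((1 - M) *ᵥ lv) = lv := by
        rw [Matrix.mulVec_mulVec, Matrix.nonsing_inv_mul _ hdet, Matrix.one_mulVec]
      intro p
      have h2 : lv p - x p = ((1 - M)⁻¹ *ᵥ ((1 - M) *ᵥ lv - b)) p := by
        rw [Matrix.mulVec_sub, Pi.sub_apply, h1, hx]
      have h3 : 0 ≤ ((1 - M)⁻¹ *ᵥ ((1 - M) *ᵥ lv - b)) p := by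
        refine Finset.sum_nonneg fun q _ => mul_nonneg (hinvnn p q) ?_
        have h4 := hstep q
        rw [Pi.sub_apply, Matrix.sub_mulVec, Matrix.one_mulVec, Pi.sub_apply]
        linarith
      linarith
    calc ∑ ℓ, x (ℓ, i) ≤ ∑ ℓ, lam ℓ i := Finset.sum_le_sum fun ℓ _ => hle (ℓ, i)
      _ < vbar i := hsum i
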